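/- Let ν ≠ 0 and c > 0 be real numbers, and let μ : I → ℝ be a differentiable function on an open interval I satisfying μ′(u) + ν·μ(u)² + 4cν = 0 for all u ∈ I. Then there exists η ∈ ℝ such that for every u ∈ I one has cos(η − 2ν√c·u) ≠ 0 and μ(u) = 2√c · tan(η − 2ν√c·u). -/

import Mathlib

open Real

/-- integration of the ODE `μ′ + νμ² + 4cν = 0` on an open interval:
`μ(u) = 2√c · tan(η − 2ν√c·u)` for some constant `η`. -/
theorem stmt3 (ν c : ℝ) (hν : ν ≠ 0) (hc : 0 < c)
    (p q : ℝ) (I : Set ℝ) (hI : I = Set.Ioo p q)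
    (μ : ℝ → ℝ)
    (hode : ∀ u ∈ I, HasDerivAt μ (-(ν * μ u ^ 2 + 4 * c * ν)) u) :
    ∃ η : ℝ, ∀ u ∈ I,
      cos (η - 2 * ν * Real.sqrt c * u) ≠ 0 ∧
      μ u = 2 * Real.sqrt c * tan (η - 2 * ν * Real.sqrt c * u) := by
  set s := Real.sqrt c with hs
  have hspos : 0 < s := Real.sqrt_pos.2 hc
  have hssq : s ^ 2 = c := Real.sq_sqrt hc.le
  set g : ℝ → ℝ := fun u => arctan (μ u / (2 * s)) + 2 * ν * s * u with hg
  have hgderiv : ∀ u ∈ I, HasDerivAt g 0 u := by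
    intro u hu
    have h1 : HasDerivAt (fun u => μ u / (2 * s))
        (-(ν * μ u ^ 2 + 4 * c * ν) / (2 * s)) u := (hode u hu).div_const _
    have h2 : HasDerivAt (fun u => arctan (μ u / (2 * s)))
        ((1 / (1 + (μ u / (2 * s)) ^ 2)) * (-(ν * μ u ^ 2 + 4 * c * ν) / (2 * s))) u :=
      by have := (Real.hasDerivAt_arctan (μ u / (2 * s))).comp u h1; exact this
    have h3 : HasDerivAt (fun u => 2 * ν * s * u) (2 * ν * s) u :=
      by simpa using (hasDerivAt_id u).const_mul (2 * ν * s)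
    have := h2.add h3
    refine (this : HasDerivAt g _ u).congr_deriv (Eq.symm ?_)
    have hden : 1 + (μ u / (2 * s)) ^ 2 ≠ 0 := by positivity
    rw [← hssq]
    field_simp
    ring
  rcases Set.eq_empty_or_nonempty I with hIe | ⟨u₀, hu₀⟩
  · exact ⟨0, fun u hu => absurd (hIe ▸ hu) (Set.notMem_empty u)⟩
  · refine ⟨g u₀, fun u hu => ?_⟩
    have hconv : Convex ℝ I := hI ▸ convex_Ioo p q
    have hgconst : g u = g u₀ := by
      have := hconv.norm_image_sub_le_of_norm_hasDerivWithin_le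
        (f' := fun _ => (0 : ℝ)) (C := 0)
        (fun x hx => (hgderiv x hx).hasDerivWithinAt)
        (fun x hx => by simp) hu₀ hu
      have h0 : ‖g u - g u₀‖ ≤ 0 := by simpa using this
      have := norm_nonneg (g u - g u₀)
      have : ‖g u - g u₀‖ = 0 := le_antisymm h0 this
      rw [norm_eq_zero, sub_eq_zero] at this
      exact this
    have key : g u₀ - 2 * ν * s * u = arctan (μ u / (2 * s)) := by
      rw [← hgconst]; simp [hg]
    constructor
    · rw [key]
      exact (Real.cos_arctan _).symm ▸ (by positivity)
    · rw [key, Real.tan_arctan]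
      field_simp
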